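/- Let b be a strictly increasing sequence of positive integers and p > 0. If ∑_{n≥1} (b_n/b_{n+1})^p < ∞, then G_p(b) = {t ∈ ℝ/ℤ : ∑_n ‖b_n t‖^p < ∞} is uncountable. (In fact it contains a Cantor set of t with ‖b_n t‖ ≤ 4 b_n/b_{n+1} for all large n.) -/

import Mathlib

/-- `G_p(b)` inside the circle `ℝ/ℤ`; the norm on `AddCircle (1:ℝ)` is the
distance to the nearest integer. -/
noncomputable def Gp (b : ℕ → ℕ) (p : ℝ) : Set (AddCircle (1:ℝ)) :=
  {t | Summable (fun n => ‖b n • t‖ ^ p)}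

section aux

lemma uncountable_nat_bool : Uncountable (ℕ → Bool) := by
  rw [uncountable_iff_forall_not_surjective]
  intro f hf
  obtain ⟨n, hn⟩ := hf (fun k => !f k k)
  have := congrFun hn n
  simp at this

/-- The recursively chosen numerators. -/
noncomputable def aSeq (B : ℕ → ℕ) (ε : ℕ → Bool) : ℕ → ℕ
  | 0 => 0
  | n + 1 => ⌈((B (n+1) * aSeq B ε n : ℕ) : ℝ) / (B n : ℝ)⌉₊ + (if ε n then 1 else 0)

/-- Successive increments of `aSeq n / B n`. -/
noncomputable def dSeq (B : ℕ → ℕ) (ε : ℕ → Bool) (n : ℕ) : ℝ :=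
  (aSeq B ε (n+1) : ℝ) / B (n+1) - (aSeq B ε n : ℝ) / B n

/-- The limit point. -/
noncomputable def tOf (B : ℕ → ℕ) (ε : ℕ → Bool) : ℝ := ∑' n, dSeq B ε n

variable {B : ℕ → ℕ} (hB0 : 0 < B 0) (hB : ∀ n, 10 * B n < B (n + 1))

include hB0 hB

lemma Bpos : ∀ n, 0 < B n := by
  intro n
  induction n with
  | zero => exact hB0
  | succ k ih => have := hB k; omega

lemma Bgrow : ∀ n k, 10 ^ k * B n ≤ B (n + k) := by
  intro n k
  induction k with
  | zero => simp
  | succ k ih =>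
      have h1 := hB (n + k)
      have e : n + (k + 1) = (n + k) + 1 := rfl
      rw [e, show 10 ^ (k+1) * B n = 10 * (10 ^ k * B n) by ring]
      omega

lemma Bbig (n : ℕ) : 10 ^ n ≤ B n := by
  have h := Bgrow hB0 hB 0 n
  simp only [Nat.zero_add] at h
  calc 10 ^ n = 10 ^ n * 1 := by ring
  _ ≤ 10 ^ n * B 0 := Nat.mul_le_mul_left _ hB0
  _ ≤ B n := by simpa using h

lemma dSeq_nonneg (ε : ℕ → Bool) (n : ℕ) : 0 ≤ dSeq B ε n := by
  have hBn : (0:ℝ) < B n := by exact_mod_cast Bpos hB0 hB n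
  have hBn1 : (0:ℝ) < B (n+1) := by exact_mod_cast Bpos hB0 hB (n+1)
  have hx : ((B (n+1) * aSeq B ε n : ℕ) : ℝ) / (B n : ℝ)
      ≤ (aSeq B ε (n+1) : ℝ) := by
    calc ((B (n+1) * aSeq B ε n : ℕ) : ℝ) / (B n : ℝ)
        ≤ (⌈((B (n+1) * aSeq B ε n : ℕ) : ℝ) / (B n : ℝ)⌉₊ : ℝ) := Nat.le_ceil _
      _ ≤ (aSeq B ε (n+1) : ℝ) := by
          rw [show aSeq B ε (n+1)
            = ⌈((B (n+1) * aSeq B ε n : ℕ) : ℝ) / (B n : ℝ)⌉₊ + (if ε n then 1 else 0) from rfl]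
          push_cast
          split <;> norm_num
  rw [dSeq, sub_nonneg, div_le_div_iff₀ hBn hBn1]
  have := mul_le_mul_of_nonneg_right hx hBn.le
  rw [div_mul_cancel₀ _ hBn.ne'] at this
  push_cast at this ⊢
  linarith

lemma dSeq_le (ε : ℕ → Bool) (n : ℕ) : dSeq B ε n ≤ 2 / B (n+1) := by
  have hBn : (0:ℝ) < B n := by exact_mod_cast Bpos hB0 hB n
  have hBn1 : (0:ℝ) < B (n+1) := by exact_mod_cast Bpos hB0 hB (n+1)
  set x : ℝ := ((B (n+1) * aSeq B ε n : ℕ) : ℝ) / (B n : ℝ) with hxdef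
  have hx0 : 0 ≤ x := by positivity
  have hceil : (⌈x⌉₊ : ℝ) < x + 1 := Nat.ceil_lt_add_one hx0
  have hup : (aSeq B ε (n+1) : ℝ) ≤ x + 2 := by
    rw [show aSeq B ε (n+1) = ⌈x⌉₊ + (if ε n then 1 else 0) from rfl]
    push_cast
    split <;> linarith
  have hxval : x / (B (n+1) : ℝ) = (aSeq B ε n : ℝ) / B n := by
    rw [hxdef]
    push_cast
    field_simp
  rw [dSeq, sub_le_iff_le_add]
  calc (aSeq B ε (n+1) : ℝ) / B (n+1) ≤ (x + 2) / B (n+1) := by gcongr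
    _ = x / B (n+1) + 2 / B (n+1) := by ring
    _ = 2 / B (n+1) + (aSeq B ε n : ℝ) / B n := by rw [hxval]; ring

lemma dSeq_le_geom (ε : ℕ → Bool) (n : ℕ) : dSeq B ε n ≤ 2 * (1/10 : ℝ) ^ n := by
  have h1 := dSeq_le hB0 hB ε n
  have h2 : (10 : ℝ) ^ (n+1) ≤ B (n+1) := by exact_mod_cast Bbig hB0 hB (n+1)
  calc dSeq B ε n ≤ 2 / B (n+1) := h1
    _ ≤ 2 / (10:ℝ) ^ (n+1) := by gcongr
    _ ≤ 2 / (10:ℝ) ^ n := by gcongr <;> norm_num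
    _ = 2 * (1/10 : ℝ) ^ n := by rw [div_pow, one_pow]; ring

lemma summable_dSeq (ε : ℕ → Bool) : Summable (dSeq B ε) :=
  Summable.of_nonneg_of_le (dSeq_nonneg hB0 hB ε) (dSeq_le_geom hB0 hB ε)
    ((summable_geometric_of_lt_one (by norm_num) (by norm_num)).mul_left 2)

omit hB0 hB in
lemma sum_dSeq (ε : ℕ → Bool) (n : ℕ) :
    ∑ k ∈ Finset.range n, dSeq B ε k = (aSeq B ε n : ℝ) / B n := by
  have := Finset.sum_range_sub (fun k => (aSeq B ε k : ℝ) / B k) n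
  simpa [dSeq, aSeq] using this

lemma tOf_ge (ε : ℕ → Bool) (n : ℕ) : (aSeq B ε n : ℝ) / B n ≤ tOf B ε := by
  have hs := summable_dSeq hB0 hB ε
  have hsplit := Summable.sum_add_tsum_nat_add n hs
  rw [sum_dSeq ε n] at hsplit
  have htail : 0 ≤ ∑' k, dSeq B ε (k + n) :=
    tsum_nonneg (fun k => dSeq_nonneg hB0 hB ε (k + n))
  rw [tOf, ← hsplit]
  linarith

lemma tOf_le (ε : ℕ → Bool) (n : ℕ) :
    tOf B ε ≤ (aSeq B ε n : ℝ) / B n + 4 / B (n+1) := by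
  have hs := summable_dSeq hB0 hB ε
  have hsplit := Summable.sum_add_tsum_nat_add n hs
  rw [sum_dSeq ε n] at hsplit
  have hBn1 : (0:ℝ) < B (n+1) := by exact_mod_cast Bpos hB0 hB (n+1)
  have hbound : ∀ k, dSeq B ε (k + n) ≤ 2 / B (n+1) * (1/10 : ℝ) ^ k := by
    intro k
    have h1 := dSeq_le hB0 hB ε (k + n)
    have h2 : (10:ℝ) ^ k * B (n+1) ≤ B (k + n + 1) := by
      have h := Bgrow hB0 hB (n+1) k
      rw [show n + 1 + k = k + n + 1 by omega] at h
      exact_mod_cast h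
    have h3 : (0:ℝ) < (10:ℝ) ^ k * B (n+1) := by positivity
    calc dSeq B ε (k + n) ≤ 2 / B (k + n + 1) := h1
      _ ≤ 2 / ((10:ℝ) ^ k * B (n+1)) := by
          apply div_le_div_of_nonneg_left (by norm_num) h3 h2
      _ = 2 / B (n+1) * (1/10 : ℝ) ^ k := by
          rw [div_pow, one_pow]
          field_simp
  have hsumg : Summable (fun k : ℕ => 2 / (B (n+1) : ℝ) * (1/10 : ℝ) ^ k) :=
    (summable_geometric_of_lt_one (by norm_num) (by norm_num)).mul_left _
  have hsn : Summable (fun k => dSeq B ε (k + n)) := (summable_nat_add_iff n).mpr hs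
  have htail : ∑' k, dSeq B ε (k + n) ≤ ∑' k : ℕ, 2 / (B (n+1) : ℝ) * (1/10 : ℝ) ^ k :=
    Summable.tsum_le_tsum hbound hsn hsumg
  have hgeo : ∑' k : ℕ, 2 / (B (n+1) : ℝ) * (1/10 : ℝ) ^ k
      = 2 / B (n+1) * (1 - 1/10)⁻¹ := by
    rw [tsum_mul_left, tsum_geometric_of_lt_one (by norm_num) (by norm_num)]
  have hfin : 2 / (B (n+1) : ℝ) * (1 - 1/10 : ℝ)⁻¹ ≤ 4 / B (n+1) := by
    rw [div_mul_eq_mul_div, div_le_div_iff₀ hBn1 hBn1]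
    nlinarith [hBn1.le]
  rw [tOf, ← hsplit]
  linarith [htail.trans (hgeo ▸ hfin)]

omit hB0 hB in
lemma aSeq_congr {ε ε' : ℕ → Bool} {n : ℕ} (h : ∀ i, i < n → ε i = ε' i) :
    aSeq B ε n = aSeq B ε' n := by
  induction n with
  | zero => rfl
  | succ k ih =>
      have hk : aSeq B ε k = aSeq B ε' k := ih (fun i hi => h i (by omega))
      show ⌈((B (k+1) * aSeq B ε k : ℕ) : ℝ) / (B k : ℝ)⌉₊ + (if ε k then 1 else 0)
        = ⌈((B (k+1) * aSeq B ε' k : ℕ) : ℝ) / (B k : ℝ)⌉₊ + (if ε' k then 1 else 0)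
      rw [hk, h k (by omega)]

lemma tOf_lt {ε ε' : ℕ → Bool} {n : ℕ} (h : ∀ i, i < n → ε i = ε' i)
    (hn : ε n = false) (hn' : ε' n = true) : tOf B ε < tOf B ε' := by
  have hk : aSeq B ε n = aSeq B ε' n := aSeq_congr h
  have ha : aSeq B ε' (n+1) = aSeq B ε (n+1) + 1 := by
    show ⌈((B (n+1) * aSeq B ε' n : ℕ) : ℝ) / (B n : ℝ)⌉₊ + (if ε' n then 1 else 0)
      = ⌈((B (n+1) * aSeq B ε n : ℕ) : ℝ) / (B n : ℝ)⌉₊ + (if ε n then 1 else 0) + 1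
    rw [hk, hn, hn']
    simp
  have hBn1 : (0:ℝ) < B (n+1) := by exact_mod_cast Bpos hB0 hB (n+1)
  have hBn2 : (0:ℝ) < B (n+2) := by exact_mod_cast Bpos hB0 hB (n+2)
  have h4 : 4 / (B (n+2) : ℝ) < 1 / B (n+1) := by
    rw [div_lt_div_iff₀ hBn2 hBn1]
    have h10 : (10:ℝ) * B (n+1) < B (n+2) := by exact_mod_cast hB (n+1)
    nlinarith
  have h1 : tOf B ε ≤ (aSeq B ε (n+1) : ℝ) / B (n+1) + 4 / B (n+2) :=
    tOf_le hB0 hB ε (n+1)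
  have h2 : (aSeq B ε' (n+1) : ℝ) / B (n+1) ≤ tOf B ε' := tOf_ge hB0 hB ε' (n+1)
  have h3 : (aSeq B ε' (n+1) : ℝ) / B (n+1)
      = (aSeq B ε (n+1) : ℝ) / B (n+1) + 1 / B (n+1) := by
    rw [ha]; push_cast; ring
  linarith

lemma tOf_inj : Function.Injective (tOf B) := by
  intro ε ε' hee
  by_contra hne
  have hex : ∃ n, ε n ≠ ε' n := by
    by_contra h
    push_neg at h
    exact hne (funext h)
  set n := Nat.find hex with hndef
  have hmin : ∀ i, i < n → ε i = ε' i := fun i hi => by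
    by_contra hc
    exact Nat.find_min hex hi hc
  have hne_n : ε n ≠ ε' n := Nat.find_spec hex
  cases hεn : ε n <;> cases hεn' : ε' n
  · rw [hεn, hεn'] at hne_n; exact hne_n rfl
  · exact absurd hee (ne_of_lt (tOf_lt hB0 hB hmin hεn hεn'))
  · exact absurd hee.symm (ne_of_lt (tOf_lt hB0 hB (fun i hi => (hmin i hi).symm) hεn' hεn))
  · rw [hεn, hεn'] at hne_n; exact hne_n rfl

lemma tOf_mem (ε : ℕ → Bool) : tOf B ε ∈ Set.Ico (0:ℝ) 1 := by
  have h0 : (aSeq B ε 0 : ℝ) / B 0 = 0 := by simp [aSeq]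
  have hge := tOf_ge hB0 hB ε 0
  have hle := tOf_le hB0 hB ε 0
  rw [h0] at hge hle
  have hB1 : (10:ℝ) ≤ B 1 := by
    have h10 : (10:ℕ) ≤ B 1 := by simpa using Bbig hB0 hB 1
    exact_mod_cast h10
  have h41 : 4 / (B 1 : ℝ) ≤ 4 / 10 := by gcongr
  constructor
  · linarith
  · linarith

/-- The key norm bound. -/
lemma norm_bound (ε : ℕ → Bool) (n : ℕ) :
    ‖((B n : ℕ) • (tOf B ε : AddCircle (1:ℝ)))‖ ≤ 4 * B n / B (n+1) := by
  have hBn : (0:ℝ) < B n := by exact_mod_cast Bpos hB0 hB n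
  have hBn1 : (0:ℝ) < B (n+1) := by exact_mod_cast Bpos hB0 hB (n+1)
  set t := tOf B ε with ht
  set a := aSeq B ε n with hadef
  have e1 : ((B n : ℕ) • (t : AddCircle (1:ℝ))) = ((B n * t - a : ℝ) : AddCircle (1:ℝ)) := by
    rw [← AddCircle.coe_nsmul, nsmul_eq_mul, AddCircle.coe_sub]
    have hz : ((a : ℝ) : AddCircle (1:ℝ)) = 0 := by
      rw [AddCircle.coe_eq_zero_iff]
      exact ⟨(a : ℤ), by simp⟩
    rw [hz, sub_zero]
  rw [e1]
  have e2 : ‖((B n * t - a : ℝ) : AddCircle (1:ℝ))‖ ≤ |(B n : ℝ) * t - a| := by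
    have := QuotientAddGroup.norm_mk_le_norm (S := AddSubgroup.zmultiples (1:ℝ)) (m := (B n : ℝ) * t - a)
    simpa [Real.norm_eq_abs] using this
  refine e2.trans ?_
  have hge := tOf_ge hB0 hB ε n
  have hle := tOf_le hB0 hB ε n
  rw [← hadef, ← ht] at hge hle
  have hub : (B n : ℝ) * t - a ≤ 4 * B n / B (n+1) := by
    have h2 := mul_le_mul_of_nonneg_left hle hBn.le
    rw [mul_add, mul_div_cancel₀ _ hBn.ne'] at h2
    have h3 : (B n : ℝ) * (4 / B (n+1)) = 4 * B n / B (n+1) := by ring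
    linarith [h3 ▸ h2]
  have hlb : 0 ≤ (B n : ℝ) * t - a := by
    have h2 := mul_le_mul_of_nonneg_left hge hBn.le
    rw [mul_div_cancel₀ _ hBn.ne'] at h2
    linarith
  rw [abs_of_nonneg hlb]
  exact hub

end aux

/-- If `∑ₙ (bₙ/bₙ₊₁)ᵖ < ∞` for some `p > 0`, then `G_p(b)` is uncountable. -/
theorem stmt7 (b : ℕ → ℕ) (hb : StrictMono b) (hbpos : ∀ n, 0 < b n) (p : ℝ) (hp : 0 < p)
    (hsum : Summable (fun n => ((b n : ℝ) / (b (n + 1) : ℝ)) ^ p)) :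
    ¬ (Gp b p).Countable := by
  -- Step 1: find N with b (n+1) > 10 * b n for n ≥ N
  have htend := hsum.tendsto_atTop_zero
  have hpos : (0:ℝ) < (1/10 : ℝ) ^ p := Real.rpow_pos_of_pos (by norm_num) p
  have hev : ∀ᶠ n in Filter.atTop, ((b n : ℝ) / (b (n+1) : ℝ)) ^ p < (1/10 : ℝ) ^ p :=
    htend.eventually_lt_const hpos
  obtain ⟨N, hN⟩ := Filter.eventually_atTop.mp hev
  have hratio : ∀ n, N ≤ n → 10 * b n < b (n + 1) := by
    intro n hn
    by_contra hc
    push_neg at hc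
    have h2 : (0:ℝ) < b (n+1) := by exact_mod_cast hbpos (n+1)
    have h1 : (1/10 : ℝ) ≤ (b n : ℝ) / (b (n+1) : ℝ) := by
      rw [le_div_iff₀ h2]
      have hcr : (b (n+1) : ℝ) ≤ 10 * b n := by exact_mod_cast hc
      linarith
    have := Real.rpow_le_rpow (by norm_num) h1 hp.le
    linarith [hN n hn]
  -- Step 2: build the Cantor family
  set B : ℕ → ℕ := fun k => b (N + k) with hBdef
  have hB0 : 0 < B 0 := hbpos N
  have hB : ∀ k, 10 * B k < B (k + 1) := fun k =>
    hratio (N + k) (Nat.le_add_right N k)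
  set f : (ℕ → Bool) → AddCircle (1:ℝ) := fun ε => ((tOf B ε : ℝ) : AddCircle (1:ℝ)) with hfdef
  have hfinj : Function.Injective f := by
    intro ε ε' h
    apply tOf_inj hB0 hB
    have h1 := tOf_mem hB0 hB ε
    have h2 := tOf_mem hB0 hB ε'
    rw [show (1:ℝ) = 0 + 1 by ring] at h1 h2
    exact (AddCircle.coe_eq_coe_iff_of_mem_Ico h1 h2).mp h
  -- Step 3: range f ⊆ Gp b p
  have hrange : Set.range f ⊆ Gp b p := by
    rintro _ ⟨ε, rfl⟩
    show Summable (fun n => ‖b n • ((tOf B ε : ℝ) : AddCircle (1:ℝ))‖ ^ p)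
    rw [← summable_nat_add_iff N]
    have hcomp : Summable (fun k : ℕ => (4:ℝ)^p * ((b (k+N) : ℝ) / (b (k+N+1) : ℝ)) ^ p) :=
      ((summable_nat_add_iff N).mpr hsum).mul_left _
    apply Summable.of_nonneg_of_le (fun k => by positivity) _ hcomp
    intro k
    have hb1 : b (k + N) = B k := by
      show b (k + N) = b (N + k); rw [Nat.add_comm]
    have hb2 : b (k + N + 1) = B (k+1) := by
      show b (k + N + 1) = b (N + (k+1)); congr 1; omega
    rw [hb1, hb2]
    have hnorm := norm_bound hB0 hB ε k
    calc ‖(B k : ℕ) • ((tOf B ε : ℝ) : AddCircle (1:ℝ))‖ ^ p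
        ≤ (4 * (B k : ℝ) / B (k+1)) ^ p :=
          Real.rpow_le_rpow (norm_nonneg _) hnorm hp.le
      _ = (4:ℝ)^p * ((B k : ℝ) / B (k+1)) ^ p := by
          rw [mul_div_assoc, Real.mul_rpow (by norm_num) (by positivity)]
  -- Step 4: conclude
  intro hcount
  have h1 : (Set.range f).Countable := hcount.mono hrange
  have h2 : (Set.univ : Set (ℕ → Bool)).Countable := by
    have := h1.preimage hfinj
    rwa [Set.preimage_range] at this
  have h3 : Countable (ℕ → Bool) := Set.countable_univ_iff.mp h2
  exact absurd h3 (@not_countable _ uncountable_nat_bool)
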